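/- arXiv:1305.0509 — 4 statements merged into one kernel-verified Lean document; each statement's English description precedes it below -/
import Mathlib

section
/- Let b ∈ (0,1). Then there exists a constant c(b) > 0 depending only on b such that for every t > 0 and all x, η ∈ ℝ, one has (∫_ℝ |exp(i t η² x) − exp(i t η² y)|² / |x − y|^{1+2b} dy)^{1/2} ≤ c(b) · η^{2b} · t^{b} (where η^{2b} denotes (η²)^{b}). -/
open MeasureTheory Set

noncomputable def steinG (a b u : ℝ) : ℝ :=
  if |u| ≤ a⁻¹ then 4 * a ^ 2 * |u| ^ (1 - 2 * b) else 4 * |u| ^ (-(1 + 2 * b))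

lemma steinG_nonneg (a b u : ℝ) : 0 ≤ steinG a b u := by
  unfold steinG; split <;> positivity

lemma steinG_even (a b u : ℝ) : steinG a b (-u) = steinG a b u := by
  simp [steinG, abs_neg]

lemma steinG_integrableOn_Ioi (a b : ℝ) (ha : 0 < a) (hb0 : 0 < b) (hb1 : b < 1) :
    IntegrableOn (steinG a b) (Ioi 0) := by
  have hR : (0:ℝ) < a⁻¹ := by positivity
  rw [← Ioc_union_Ioi_eq_Ioi hR.le]
  apply IntegrableOn.union
  · have h1 : IntegrableOn (fun u : ℝ => 4 * a ^ 2 * u ^ (1 - 2 * b)) (Ioc 0 a⁻¹) := by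
      have := (intervalIntegral.intervalIntegrable_rpow'
        (show (-1:ℝ) < 1 - 2 * b by linarith) (a := 0) (b := a⁻¹))
      rw [intervalIntegrable_iff_integrableOn_Ioc_of_le hR.le] at this
      exact this.const_mul _
    refine h1.congr_fun (fun u hu => ?_) measurableSet_Ioc
    rw [steinG, if_pos (by rw [abs_of_pos hu.1]; exact hu.2), abs_of_pos hu.1]
  · have h2 : IntegrableOn (fun u : ℝ => 4 * u ^ (-(1 + 2 * b))) (Ioi a⁻¹) :=
      (integrableOn_Ioi_rpow_of_lt (show -(1 + 2 * b) < -1 by linarith) hR).const_mul _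
    refine h2.congr_fun (fun u hu => ?_) measurableSet_Ioi
    have hu0 : 0 < u := lt_trans hR hu
    rw [steinG, if_neg (by rw [abs_of_pos hu0]; exact not_le.mpr hu), abs_of_pos hu0]

lemma steinG_integrable (a b : ℝ) (ha : 0 < a) (hb0 : 0 < b) (hb1 : b < 1) :
    Integrable (steinG a b) := by
  have hioi := steinG_integrableOn_Ioi a b ha hb0 hb1
  have hiic : IntegrableOn (steinG a b) (Iic 0) := by
    rw [← Measure.map_neg_eq_self (volume : Measure ℝ)]
    have m : MeasurableEmbedding fun x : ℝ => -x :=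
      (Homeomorph.neg ℝ).measurableEmbedding
    rw [m.integrableOn_map_iff]
    have h1 : steinG a b ∘ (fun x : ℝ => -x) = steinG a b := funext fun u => steinG_even a b u
    have hpre : (fun x : ℝ => -x) ⁻¹' (Iic 0) = Ici 0 := by ext u; simp
    rw [h1, hpre]
    exact Iff.mpr integrableOn_Ici_iff_integrableOn_Ioi hioi
  rw [← integrableOn_univ, ← Set.Iic_union_Ioi (a := (0:ℝ))]
  exact hiic.union hioi

lemma steinG_integral (a b : ℝ) (ha : 0 < a) (hb0 : 0 < b) (hb1 : b < 1) :
    ∫ u, steinG a b u = (8 / (2 - 2 * b) + 8 / (2 * b)) * a ^ (2 * b) := by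
  have hR : (0:ℝ) < a⁻¹ := by positivity
  have h2b : (0:ℝ) < 2 - 2 * b := by linarith
  have hne1 : (2 - 2 * b : ℝ) ≠ 0 := ne_of_gt h2b
  have hne2 : (2 * b : ℝ) ≠ 0 := by positivity
  have habs : ∀ u : ℝ, steinG a b |u| = steinG a b u := by
    intro u; simp [steinG, abs_abs]
  have e1 : ∫ u in Ioc (0:ℝ) a⁻¹, steinG a b u = 4 / (2 - 2 * b) * a ^ (2 * b) := by
    rw [setIntegral_congr_fun measurableSet_Ioc
        (show Set.EqOn (steinG a b) (fun u : ℝ => 4 * a ^ 2 * u ^ (1 - 2 * b)) (Ioc 0 a⁻¹) from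
          fun u hu => by
            rw [steinG, if_pos (by rw [abs_of_pos hu.1]; exact hu.2), abs_of_pos hu.1]),
      integral_const_mul, ← intervalIntegral.integral_of_le hR.le,
      integral_rpow (Or.inl (by linarith))]
    rw [Real.zero_rpow (by linarith : (1 - 2 * b + 1 : ℝ) ≠ 0)]
    have k1 : a⁻¹ ^ (1 - 2 * b + 1) = a ^ (2 * b) * (a ^ 2)⁻¹ := by
      rw [Real.inv_rpow ha.le, ← Real.rpow_neg ha.le,
        show -(1 - 2 * b + 1) = 2 * b + (-2 : ℝ) by ring, Real.rpow_add ha]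
      congr 1
      rw [show (-2 : ℝ) = -((2:ℕ) : ℝ) by norm_num, Real.rpow_neg ha.le, Real.rpow_natCast]
    rw [k1, show (1 - 2 * b + 1 : ℝ) = 2 - 2 * b by ring]
    have ha2 : (a:ℝ) ^ 2 ≠ 0 := by positivity
    field_simp
    ring
  have e2 : ∫ u in Ioi a⁻¹, steinG a b u = 4 / (2 * b) * a ^ (2 * b) := by
    rw [setIntegral_congr_fun measurableSet_Ioi
        (show Set.EqOn (steinG a b) (fun u : ℝ => 4 * u ^ (-(1 + 2 * b))) (Ioi a⁻¹) from
          fun u hu => by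
            have hu0 : 0 < u := lt_trans hR hu
            rw [steinG, if_neg (by rw [abs_of_pos hu0]; exact not_le.mpr hu), abs_of_pos hu0]),
      integral_const_mul, integral_Ioi_rpow_of_lt (by linarith) hR]
    have k2 : a⁻¹ ^ (-(1 + 2 * b) + 1) = a ^ (2 * b) := by
      rw [Real.inv_rpow ha.le, ← Real.rpow_neg ha.le]
      congr 1; ring
    rw [k2, show (-(1 + 2 * b) + 1 : ℝ) = -(2 * b) by ring]
    field_simp
  calc ∫ u, steinG a b u = ∫ u, steinG a b |u| := by simp_rw [habs]
    _ = 2 * ∫ u in Ioi (0:ℝ), steinG a b u := integral_comp_abs (f := steinG a b)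
    _ = (8 / (2 - 2 * b) + 8 / (2 * b)) * a ^ (2 * b) := by
        rw [← Ioc_union_Ioi_eq_Ioi hR.le,
          setIntegral_union (Ioc_disjoint_Ioi le_rfl) measurableSet_Ioi
            ((steinG_integrableOn_Ioi a b ha hb0 hb1).mono_set Ioc_subset_Ioi_self)
            ((steinG_integrableOn_Ioi a b ha hb0 hb1).mono_set (Ioi_subset_Ioi hR.le)),
          e1, e2]
        ring

/-- Stein derivative bound for `x ↦ exp(i t η² x)`:
for `b ∈ (0,1)` there is `c(b) > 0` such that for all `t > 0` and `x η : ℝ`,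
`𝒟^b (e^{itη²·})(x) ≤ c(b) (η²)^b t^b`. -/
theorem stein_derivative_exp_sq_bound (b : ℝ) (hb : b ∈ Set.Ioo (0 : ℝ) 1) :
    ∃ c : ℝ, 0 < c ∧ ∀ t : ℝ, 0 < t → ∀ x η : ℝ,
      (∫ y : ℝ, ‖Complex.exp (Complex.I * (t : ℂ) * (η : ℂ) ^ 2 * (x : ℂ)) -
          Complex.exp (Complex.I * (t : ℂ) * (η : ℂ) ^ 2 * (y : ℂ))‖ ^ 2 /
          |x - y| ^ (1 + 2 * b)) ^ ((1 : ℝ) / 2)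
        ≤ c * (η ^ 2) ^ b * t ^ b := by
  obtain ⟨hb0, hb1⟩ := hb
  have h2b : (0:ℝ) < 2 - 2 * b := by linarith
  set C : ℝ := 8 / (2 - 2 * b) + 8 / (2 * b) with hCdef
  have hC : 0 < C := by
    rw [hCdef]
    exact add_pos (div_pos (by norm_num) h2b) (div_pos (by norm_num) (by linarith))
  refine ⟨Real.sqrt C, Real.sqrt_pos.mpr hC, ?_⟩
  intro t ht x η
  rcases eq_or_ne η 0 with hη | hη
  · subst hη
    simp only [Complex.ofReal_zero, ne_eq, OfNat.ofNat_ne_zero, not_false_eq_true, zero_pow,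
      mul_zero, zero_mul, Complex.exp_zero, sub_self, norm_zero, zero_div, integral_zero]
    rw [Real.zero_rpow (by norm_num : ((1:ℝ)/2) ≠ 0), Real.zero_rpow hb0.ne']
    have h : (0:ℝ) ≤ Real.sqrt C * 0 * t ^ b := by simp
    simpa using h
  · have hη2 : 0 < η ^ 2 := lt_of_le_of_ne (sq_nonneg η) (Ne.symm (pow_ne_zero 2 hη))
    set a : ℝ := t * η ^ 2 with hadef
    have ha : 0 < a := by rw [hadef]; exact mul_pos ht hη2
    have hpoint : ∀ y : ℝ,
        ‖Complex.exp (Complex.I * (t : ℂ) * (η : ℂ) ^ 2 * (x : ℂ)) -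
          Complex.exp (Complex.I * (t : ℂ) * (η : ℂ) ^ 2 * (y : ℂ))‖ ^ 2 /
          |x - y| ^ (1 + 2 * b) ≤ steinG a b (x - y) := by
      intro y
      rcases eq_or_ne y x with rfl | hyx
      · simpa using steinG_nonneg a b 0
      · have hu : 0 < |x - y| := abs_pos.mpr (sub_ne_zero.mpr (Ne.symm hyx))
        have hfac : Complex.exp (Complex.I * (t : ℂ) * (η : ℂ) ^ 2 * (x : ℂ)) -
            Complex.exp (Complex.I * (t : ℂ) * (η : ℂ) ^ 2 * (y : ℂ)) =
            Complex.exp (Complex.I * (t : ℂ) * (η : ℂ) ^ 2 * (y : ℂ)) *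
              (Complex.exp (((a * (x - y) : ℝ) : ℂ) * Complex.I) - 1) := by
          rw [mul_sub, mul_one, ← Complex.exp_add]
          congr 1
          rw [hadef]
          push_cast
          ring
        have habs1 : ‖Complex.exp (Complex.I * (t : ℂ) * (η : ℂ) ^ 2 * (y : ℂ))‖ = 1 := by
          rw [show Complex.I * (t : ℂ) * (η : ℂ) ^ 2 * (y : ℂ)
              = ((t * η ^ 2 * y : ℝ) : ℂ) * Complex.I by push_cast; ring,
            Complex.norm_exp_ofReal_mul_I]
        have hnorm : ‖Complex.exp (Complex.I * (t : ℂ) * (η : ℂ) ^ 2 * (x : ℂ)) -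
            Complex.exp (Complex.I * (t : ℂ) * (η : ℂ) ^ 2 * (y : ℂ))‖
            = ‖Complex.exp (((a * (x - y) : ℝ) : ℂ) * Complex.I) - 1‖ := by
          rw [hfac, norm_mul, habs1, one_mul]
        rw [hnorm, steinG]
        have hD : 0 < |x - y| ^ (1 + 2 * b) := Real.rpow_pos_of_pos hu _
        split_ifs with hcase
        · have hz : ‖((a * (x - y) : ℝ) : ℂ) * Complex.I‖ = a * |x - y| := by
            rw [norm_mul, Complex.norm_I, mul_one, Complex.norm_real, Real.norm_eq_abs, abs_mul, abs_of_pos ha]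
          have hz1 : ‖((a * (x - y) : ℝ) : ℂ) * Complex.I‖ ≤ 1 := by
            rw [hz]
            calc a * |x - y| ≤ a * a⁻¹ := mul_le_mul_of_nonneg_left hcase ha.le
              _ = 1 := mul_inv_cancel₀ ha.ne'
          have hb1' : ‖Complex.exp (((a * (x - y) : ℝ) : ℂ) * Complex.I) - 1‖
              ≤ 2 * (a * |x - y|) := by
            calc ‖Complex.exp (((a * (x - y) : ℝ) : ℂ) * Complex.I) - 1‖
                ≤ 2 * ‖((a * (x - y) : ℝ) : ℂ) * Complex.I‖ :=
                  Complex.norm_exp_sub_one_le hz1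
              _ = 2 * (a * |x - y|) := by rw [hz]
          have hsq : ‖Complex.exp (((a * (x - y) : ℝ) : ℂ) * Complex.I) - 1‖ ^ 2
              ≤ (2 * (a * |x - y|)) ^ 2 := pow_le_pow_left₀ (norm_nonneg _) hb1' 2
          calc ‖Complex.exp (((a * (x - y) : ℝ) : ℂ) * Complex.I) - 1‖ ^ 2 /
                |x - y| ^ (1 + 2 * b)
              ≤ (2 * (a * |x - y|)) ^ 2 / |x - y| ^ (1 + 2 * b) :=
                (div_le_div_iff_of_pos_right hD).mpr hsq
            _ = 4 * a ^ 2 * |x - y| ^ (1 - 2 * b) := by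
                have h2' : ((2 : ℝ) * (a * |x - y|)) ^ 2
                    = 4 * a ^ 2 * |x - y| ^ ((2:ℝ)) := by
                  rw [show |x - y| ^ ((2:ℝ)) = |x - y| ^ (2:ℕ) by
                    rw [← Real.rpow_natCast]; norm_num]
                  ring
                rw [h2', mul_div_assoc, ← Real.rpow_sub hu,
                  show ((2:ℝ) - (1 + 2 * b)) = 1 - 2 * b by ring]
        · have hb2 : ‖Complex.exp (((a * (x - y) : ℝ) : ℂ) * Complex.I) - 1‖ ≤ 2 := by
            calc ‖Complex.exp (((a * (x - y) : ℝ) : ℂ) * Complex.I) - 1‖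
                ≤ ‖Complex.exp (((a * (x - y) : ℝ) : ℂ) * Complex.I)‖ + ‖(1:ℂ)‖ :=
                  norm_sub_le _ _
              _ = 2 := by
                  rw [Complex.norm_exp_ofReal_mul_I, norm_one]
                  norm_num
          have hsq : ‖Complex.exp (((a * (x - y) : ℝ) : ℂ) * Complex.I) - 1‖ ^ 2 ≤ 4 := by
            calc ‖Complex.exp (((a * (x - y) : ℝ) : ℂ) * Complex.I) - 1‖ ^ 2
                ≤ 2 ^ 2 := pow_le_pow_left₀ (norm_nonneg _) hb2 2
              _ = 4 := by norm_num
          calc ‖Complex.exp (((a * (x - y) : ℝ) : ℂ) * Complex.I) - 1‖ ^ 2 /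
                |x - y| ^ (1 + 2 * b)
              ≤ 4 / |x - y| ^ (1 + 2 * b) := (div_le_div_iff_of_pos_right hD).mpr hsq
            _ = 4 * |x - y| ^ (-(1 + 2 * b)) := by
                rw [Real.rpow_neg (abs_nonneg _), div_eq_mul_inv]
    have hg : Integrable (fun y : ℝ => steinG a b (x - y)) :=
      (steinG_integrable a b ha hb0 hb1).comp_sub_left x
    have hmono : (∫ y : ℝ, ‖Complex.exp (Complex.I * (t : ℂ) * (η : ℂ) ^ 2 * (x : ℂ)) -
          Complex.exp (Complex.I * (t : ℂ) * (η : ℂ) ^ 2 * (y : ℂ))‖ ^ 2 /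
          |x - y| ^ (1 + 2 * b)) ≤ ∫ y : ℝ, steinG a b (x - y) := by
      apply integral_mono_of_nonneg
      · exact ae_of_all _ fun y => by positivity
      · exact hg
      · exact ae_of_all _ hpoint
    have hval : (∫ y : ℝ, steinG a b (x - y)) = C * a ^ (2 * b) := by
      rw [integral_sub_left_eq_self (steinG a b) volume x, hCdef]
      exact steinG_integral a b ha hb0 hb1
    rw [hval] at hmono
    have hInn : (0:ℝ) ≤ ∫ y : ℝ, ‖Complex.exp (Complex.I * (t : ℂ) * (η : ℂ) ^ 2 * (x : ℂ)) -
          Complex.exp (Complex.I * (t : ℂ) * (η : ℂ) ^ 2 * (y : ℂ))‖ ^ 2 /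
          |x - y| ^ (1 + 2 * b) :=
      integral_nonneg fun y => by positivity
    calc (∫ y : ℝ, ‖Complex.exp (Complex.I * (t : ℂ) * (η : ℂ) ^ 2 * (x : ℂ)) -
          Complex.exp (Complex.I * (t : ℂ) * (η : ℂ) ^ 2 * (y : ℂ))‖ ^ 2 /
          |x - y| ^ (1 + 2 * b)) ^ ((1:ℝ)/2)
        ≤ (C * a ^ (2 * b)) ^ ((1:ℝ)/2) := Real.rpow_le_rpow hInn hmono (by norm_num)
      _ = Real.sqrt C * (η ^ 2) ^ b * t ^ b := by
          rw [Real.mul_rpow hC.le (Real.rpow_nonneg ha.le _),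
            ← Real.rpow_mul ha.le, show (2 * b * ((1:ℝ)/2)) = b by ring,
            hadef, Real.mul_rpow ht.le (sq_nonneg η), Real.sqrt_eq_rpow]
          ring
end

section
/- Let b ∈ (0,1). Then there exists a constant c > 0 such that for every t > 0 and every x ∈ ℝ, (∫_ℝ |exp(−i t x|x|) − exp(−i t y|y|)|² / |x − y|^{1+2b} dy)^{1/2} ≤ c (t^{b/2} + t^{b} |x|^{b}). -/
open MeasureTheory Set

-- aux 1: subadditivity of rpow for exponent in [0,1]
lemma my_rpow_add_le (a c p : ℝ) (ha : 0 ≤ a) (hc : 0 ≤ c) (hp : 0 ≤ p) (hp1 : p ≤ 1) :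
    (a + c) ^ p ≤ a ^ p + c ^ p := by
  have h := NNReal.rpow_add_le_add_rpow a.toNNReal c.toNNReal hp hp1
  have := (NNReal.coe_le_coe).2 h
  simpa [NNReal.coe_rpow, Real.coe_toNNReal _ ha, Real.coe_toNNReal _ hc,
    Real.coe_toNNReal _ (add_nonneg ha hc)] using this

-- aux 2
lemma my_abs_bound (x y : ℝ) : abs (x * |x| - y * |y|) ≤ (|x| + |y|) * |x - y| := by
  rcases le_total 0 x with hx | hx <;> rcases le_total 0 y with hy | hy
  · rw [abs_of_nonneg hx, abs_of_nonneg hy]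
    have h : x * x - y * y = (x + y) * (x - y) := by ring
    rw [h, abs_mul, abs_of_nonneg (add_nonneg hx hy)]
  · rw [abs_of_nonneg hx, abs_of_nonpos hy]
    rcases abs_cases (x * x - y * -y) with ⟨h3, _⟩ | ⟨h3, _⟩ <;>
    rcases abs_cases (x - y) with ⟨h1, _⟩ | ⟨h1, _⟩ <;> rw [h3, h1] <;> nlinarith
  · rw [abs_of_nonpos hx, abs_of_nonneg hy]
    rcases abs_cases (x * -x - y * y) with ⟨h3, _⟩ | ⟨h3, _⟩ <;>
    rcases abs_cases (x - y) with ⟨h1, _⟩ | ⟨h1, _⟩ <;> rw [h3, h1] <;> nlinarith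
  · rw [abs_of_nonpos hx, abs_of_nonpos hy]
    have h : x * -x - y * -y = -((x + y) * (x - y)) := by ring
    rw [h, abs_neg, abs_mul]
    have : |x + y| = -(x + y) := abs_of_nonpos (by linarith)
    rw [this]
    have := abs_nonneg (x - y)
    nlinarith

-- aux 3: norm of exp of purely imaginary
lemma my_norm_exp (t z w : ℝ) :
    ‖Complex.exp (-(Complex.I * (t : ℂ) * (z : ℂ) * (w : ℝ)))‖ = 1 := by
  rw [Complex.norm_exp]
  simp

set_option maxHeartbeats 1000000 in
/-- Stein derivative bound for `x ↦ exp(−i t x|x|)`: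
for `b ∈ (0,1)` there is `c > 0` such that for all `t > 0` and `x : ℝ`,
`𝒟^b (e^{−it·|·|})(x) ≤ c (t^{b/2} + t^b |x|^b)`. -/
theorem stein_derivative_exp_xabs_bound (b : ℝ) (hb : b ∈ Set.Ioo (0 : ℝ) 1) :
    ∃ c : ℝ, 0 < c ∧ ∀ t : ℝ, 0 < t → ∀ x : ℝ,
      (∫ y : ℝ, ‖Complex.exp (-(Complex.I * (t : ℂ) * (x : ℂ) * (|x| : ℝ))) -
          Complex.exp (-(Complex.I * (t : ℂ) * (y : ℂ) * (|y| : ℝ)))‖ ^ 2 /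
          |x - y| ^ (1 + 2 * b)) ^ ((1 : ℝ) / 2)
        ≤ c * (t ^ (b / 2) + t ^ b * |x| ^ b) := by
  obtain ⟨hb0, hb1⟩ := hb
  obtain ⟨C, hCdef⟩ : ∃ C : ℝ, C = 16 / (1 - b) + 16 / b := ⟨_, rfl⟩
  have hC : 0 < C := by
    have h1 : 0 < 1 - b := by linarith
    rw [hCdef]; positivity
  refine ⟨Real.sqrt C, Real.sqrt_pos.mpr hC, ?_⟩
  intro t ht x
  obtain ⟨u, hudef⟩ : ∃ u : ℝ, u = t ^ (-(1 / 2) : ℝ) := ⟨_, rfl⟩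
  have hu : 0 < u := hudef ▸ Real.rpow_pos_of_pos ht _
  obtain ⟨s, hsdef⟩ : ∃ s : ℝ, s = |x| + u := ⟨_, rfl⟩
  have hs : 0 < s := by
    have := abs_nonneg x
    rw [hsdef]; linarith
  have hsu : u ≤ s := by
    have := abs_nonneg x
    rw [hsdef]; linarith
  have hts : 0 < t * s := mul_pos ht hs
  have huut : u * u * t = 1 := by
    have he : (-(1/2:ℝ)) + (-(1/2)) = -1 := by norm_num
    rw [hudef, ← Real.rpow_add ht, he, Real.rpow_neg_one]
    exact inv_mul_cancel₀ ht.ne'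
  obtain ⟨r, hrdef⟩ : ∃ r : ℝ, r = (2 * (t * s))⁻¹ := ⟨_, rfl⟩
  have hr : 0 < r := by rw [hrdef]; positivity
  have hrmul : r * (2 * (t * s)) = 1 := by
    rw [hrdef]
    exact inv_mul_cancel₀ (by positivity)
  have hru : r ≤ u := by
    have h1 : 1 ≤ u * (2 * (t * s)) := by
      nlinarith [mul_nonneg (mul_nonneg (sub_nonneg.2 hsu) hu.le) ht.le]
    have h2 : r * (2 * (t * s)) ≤ u * (2 * (t * s)) := by rw [hrmul]; exact h1
    exact le_of_mul_le_mul_right h2 (by positivity)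
  obtain ⟨A, hAdef⟩ : ∃ A : ℝ, A = 16 * (t * s) ^ 2 := ⟨_, rfl⟩
  have hA : 0 < A := by rw [hAdef]; positivity
  obtain ⟨K, hKdef⟩ : ∃ K : ℝ → ℝ,
      K = fun v => if v ≤ r then A * v ^ (1 - 2 * b) else 4 * v ^ (-(1 + 2 * b)) := ⟨_, rfl⟩
  obtain ⟨f, hfdef⟩ : ∃ f : ℝ → ℝ,
      f = fun y : ℝ => ‖Complex.exp (-(Complex.I * (t : ℂ) * (x : ℂ) * (|x| : ℝ))) -
          Complex.exp (-(Complex.I * (t : ℂ) * (y : ℂ) * (|y| : ℝ)))‖ ^ 2 /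
          |x - y| ^ (1 + 2 * b) := ⟨_, rfl⟩
  have hgoal : (∫ y : ℝ, ‖Complex.exp (-(Complex.I * (t : ℂ) * (x : ℂ) * (|x| : ℝ))) -
          Complex.exp (-(Complex.I * (t : ℂ) * (y : ℂ) * (|y| : ℝ)))‖ ^ 2 /
          |x - y| ^ (1 + 2 * b)) = ∫ y, f y := by simp only [hfdef]
  rw [hgoal]
  -- nonnegativity of f
  have hf0 : ∀ y, 0 ≤ f y := by
    intro y
    have h1 : (0:ℝ) ≤ |x - y| ^ (1 + 2 * b) := Real.rpow_nonneg (abs_nonneg _) _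
    simp only [hfdef]
    positivity
  -- pointwise bound
  have hfK : ∀ y, f y ≤ K (|x - y|) := by
    intro y
    by_cases hxy : x = y
    · subst hxy
      have h1 : f x = 0 := by simp [hfdef]
      have h2 : (0:ℝ) ≤ K |x - x| := by
        simp only [hKdef, sub_self, abs_zero, if_pos hr.le]
        exact mul_nonneg hA.le (Real.rpow_nonneg le_rfl _)
      rw [h1]; exact h2
    · have hd0 : 0 < |x - y| := abs_pos.2 (sub_ne_zero.2 (fun h => hxy (by linarith)))
      have hpow : (0:ℝ) < |x - y| ^ (1 + 2 * b) := Real.rpow_pos_of_pos hd0 _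
      have lhs_eq : f y = ‖Complex.exp (-(Complex.I * (t : ℂ) * (x : ℂ) * (|x| : ℝ))) -
          Complex.exp (-(Complex.I * (t : ℂ) * (y : ℂ) * (|y| : ℝ)))‖ ^ 2 /
          |x - y| ^ (1 + 2 * b) := by simp only [hfdef]
      by_cases hcase : |x - y| ≤ r
      · -- small increments
        have hyx : |y| ≤ |x| + |x - y| := by
          have h1 := abs_sub_abs_le_abs_sub y x
          have h2 : |y - x| = |x - y| := abs_sub_comm y x
          linarith
        have hsum : |x| + |y| ≤ 2 * s := by
          have h1 : |x - y| ≤ u := le_trans hcase hru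
          rw [hsdef]
          linarith
        obtain ⟨w, hw⟩ : ∃ w : ℂ, w = ((-(t * (x * |x| - y * |y|)) : ℝ) : ℂ) * Complex.I :=
          ⟨_, rfl⟩
        have hsplit : Complex.exp (-(Complex.I * (t : ℂ) * (x : ℂ) * (|x| : ℝ))) -
            Complex.exp (-(Complex.I * (t : ℂ) * (y : ℂ) * (|y| : ℝ)))
            = Complex.exp (-(Complex.I * (t : ℂ) * (y : ℂ) * (|y| : ℝ))) *
              (Complex.exp w - 1) := by
          rw [mul_sub, mul_one, ← Complex.exp_add]
          congr 1
          rw [hw]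
          push_cast
          ring
        have habsw : ‖w‖ = t * abs (x * |x| - y * |y|) := by
          rw [hw, norm_mul, Complex.norm_I, Complex.norm_real, Real.norm_eq_abs, mul_one, abs_neg, abs_mul,
            abs_of_pos ht]
        have hbd : t * abs (x * |x| - y * |y|) ≤ t * (2 * s * |x - y|) := by
          have h1 := my_abs_bound x y
          have h2 : (|x| + |y|) * |x - y| ≤ 2 * s * |x - y| :=
            mul_le_mul_of_nonneg_right hsum (abs_nonneg _)
          exact mul_le_mul_of_nonneg_left (le_trans h1 h2) ht.le
        have hw1 : ‖w‖ ≤ 1 := by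
          rw [habsw]
          calc t * abs (x * |x| - y * |y|) ≤ t * (2 * s * |x - y|) := hbd
            _ ≤ t * (2 * s * r) := by
                have h3 : 2 * s * |x - y| ≤ 2 * s * r :=
                  mul_le_mul_of_nonneg_left hcase (by positivity)
                exact mul_le_mul_of_nonneg_left h3 ht.le
            _ = 1 := by linear_combination hrmul
        have hnorm : ‖Complex.exp (-(Complex.I * (t : ℂ) * (x : ℂ) * (|x| : ℝ))) -
            Complex.exp (-(Complex.I * (t : ℂ) * (y : ℂ) * (|y| : ℝ)))‖
            ≤ 4 * (t * s) * |x - y| := by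
          rw [hsplit, norm_mul, my_norm_exp, one_mul]
          have h2 := Complex.norm_exp_sub_one_le hw1
          have h3 : ‖Complex.exp w - 1‖ = ‖Complex.exp w - 1‖ := rfl
          rw [h3]
          calc ‖Complex.exp w - 1‖ ≤ 2 * ‖w‖ := h2
            _ = 2 * (t * abs (x * |x| - y * |y|)) := by rw [habsw]
            _ ≤ 2 * (t * (2 * s * |x - y|)) := by linarith [hbd]
            _ = 4 * (t * s) * |x - y| := by ring
        have hnum : ‖Complex.exp (-(Complex.I * (t : ℂ) * (x : ℂ) * (|x| : ℝ))) -
            Complex.exp (-(Complex.I * (t : ℂ) * (y : ℂ) * (|y| : ℝ)))‖ ^ 2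
            ≤ A * |x - y| ^ 2 := by
          have hn0 := norm_nonneg (Complex.exp (-(Complex.I * (t : ℂ) * (x : ℂ) * (|x| : ℝ))) -
            Complex.exp (-(Complex.I * (t : ℂ) * (y : ℂ) * (|y| : ℝ))))
          have h1 := pow_le_pow_left₀ hn0 hnorm 2
          calc ‖Complex.exp (-(Complex.I * (t : ℂ) * (x : ℂ) * (|x| : ℝ))) -
              Complex.exp (-(Complex.I * (t : ℂ) * (y : ℂ) * (|y| : ℝ)))‖ ^ 2
              ≤ (4 * (t * s) * |x - y|) ^ 2 := h1
            _ = A * |x - y| ^ 2 := by rw [hAdef]; ring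
        have hKd : K (|x - y|) = A * |x - y| ^ (1 - 2 * b) := by
          simp only [hKdef]
          rw [if_pos hcase]
        have hsplitpow : A * |x - y| ^ 2 / |x - y| ^ (1 + 2 * b)
            = A * |x - y| ^ (1 - 2 * b) := by
          rw [mul_div_assoc]
          congr 1
          rw [← Real.rpow_natCast (|x - y|) 2, ← Real.rpow_sub hd0]
          congr 1
          push_cast
          ring
        rw [lhs_eq, hKd, ← hsplitpow, div_eq_mul_inv, div_eq_mul_inv]
        exact mul_le_mul_of_nonneg_right hnum (inv_nonneg.2 hpow.le)
      · -- large increments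
        have hKd : K (|x - y|) = 4 * |x - y| ^ (-(1 + 2 * b)) := by
          simp only [hKdef]
          rw [if_neg hcase]
        have hnorm : ‖Complex.exp (-(Complex.I * (t : ℂ) * (x : ℂ) * (|x| : ℝ))) -
            Complex.exp (-(Complex.I * (t : ℂ) * (y : ℂ) * (|y| : ℝ)))‖ ≤ 2 := by
          calc ‖_ - _‖ ≤ ‖Complex.exp (-(Complex.I * (t : ℂ) * (x : ℂ) * (|x| : ℝ)))‖ +
              ‖Complex.exp (-(Complex.I * (t : ℂ) * (y : ℂ) * (|y| : ℝ)))‖ := norm_sub_le _ _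
            _ = 2 := by rw [my_norm_exp, my_norm_exp]; norm_num
        have hnum : ‖Complex.exp (-(Complex.I * (t : ℂ) * (x : ℂ) * (|x| : ℝ))) -
            Complex.exp (-(Complex.I * (t : ℂ) * (y : ℂ) * (|y| : ℝ)))‖ ^ 2 ≤ 4 := by
          have hn0 := norm_nonneg (Complex.exp (-(Complex.I * (t : ℂ) * (x : ℂ) * (|x| : ℝ))) -
            Complex.exp (-(Complex.I * (t : ℂ) * (y : ℂ) * (|y| : ℝ))))
          nlinarith [hnorm]
        have heq : 4 * |x - y| ^ (-(1 + 2 * b)) = 4 / |x - y| ^ (1 + 2 * b) := by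
          rw [Real.rpow_neg hd0.le, div_eq_mul_inv]
        rw [lhs_eq, hKd, heq, div_eq_mul_inv, div_eq_mul_inv]
        exact mul_le_mul_of_nonneg_right hnum (inv_nonneg.2 hpow.le)
  -- integrability of K on pieces
  have hK1 : IntegrableOn K (Set.Ioc 0 r) := by
    have h := (intervalIntegral.intervalIntegrable_rpow' (a := 0) (b := r)
      (show (-1:ℝ) < 1 - 2 * b by linarith)).1
    have h2 : IntegrableOn (fun v : ℝ => A * v ^ (1 - 2 * b)) (Set.Ioc 0 r) := h.const_mul A
    exact h2.congr_fun (fun v hv => by simp only [hKdef]; rw [if_pos hv.2]) measurableSet_Ioc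
  have hK2 : IntegrableOn K (Set.Ioi r) := by
    have h : IntegrableOn (fun v : ℝ => v ^ (-(1 + 2 * b))) (Set.Ioi r) :=
      integrableOn_Ioi_rpow_of_lt (by linarith) hr
    have h2 : IntegrableOn (fun v : ℝ => 4 * v ^ (-(1 + 2 * b))) (Set.Ioi r) := h.const_mul 4
    exact h2.congr_fun (fun v hv => by simp only [hKdef]; rw [if_neg (not_le.2 hv)])
      measurableSet_Ioi
  have hKIoi : IntegrableOn K (Set.Ioi 0) := by
    rw [← Set.Ioc_union_Ioi_eq_Ioi hr.le]
    exact hK1.union hK2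
  -- integrability of K ∘ abs on ℝ
  have hKabs : Integrable (fun v : ℝ => K |v|) := by
    have hpos : IntegrableOn (fun v : ℝ => K |v|) (Set.Ioi 0) :=
      hKIoi.congr_fun (fun v hv => by rw [abs_of_pos hv]) measurableSet_Ioi
    have hici : IntegrableOn (fun v : ℝ => K |v|) (Set.Ici 0) :=
      (integrableOn_Ici_iff_integrableOn_Ioi (hb := enorm_ne_top)).2 hpos
    have hneg : IntegrableOn (fun v : ℝ => K |v|) (Set.Iic 0) := by
      rw [← integrable_indicator_iff measurableSet_Iic]
      have e : Set.indicator (Set.Iic (0:ℝ)) (fun v => K |v|)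
          = fun v => Set.indicator (Set.Ici (0:ℝ)) (fun v => K |v|) (-v) := by
        funext v
        by_cases h : v ≤ 0
        · rw [Set.indicator_of_mem (Set.mem_Iic.2 h),
            Set.indicator_of_mem (Set.mem_Ici.2 (by linarith : (0:ℝ) ≤ -v)), abs_neg]
        · rw [Set.indicator_of_notMem (fun hm => h (Set.mem_Iic.1 hm)),
            Set.indicator_of_notMem (fun hm => h (by simpa using Set.mem_Ici.1 hm))]
      rw [e]
      exact ((integrable_indicator_iff measurableSet_Ici).2 hici).comp_neg
    have hun : IntegrableOn (fun v : ℝ => K |v|) (Set.Iic 0 ∪ Set.Ioi 0) := hneg.union hpos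
    rwa [Set.Iic_union_Ioi, integrableOn_univ] at hun
  -- integrability of the comparison function
  have hg : Integrable (fun y : ℝ => K |x - y|) := by
    have h := hKabs.comp_sub_left x
    simpa using h
  -- integral comparison
  have step1 : ∫ y, f y ≤ ∫ y, K (|x - y|) :=
    integral_mono_of_nonneg (Filter.Eventually.of_forall hf0) hg
      (Filter.Eventually.of_forall hfK)
  -- compute the integral of K ∘ |x - ·|
  have step2 : ∫ y, K (|x - y|) = 2 * ∫ v in Set.Ioi (0:ℝ), K v := by
    have h1 : ∫ y, K (|x - y|) = ∫ v, K (|v|) :=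
      integral_sub_left_eq_self (fun v => K (|v|)) volume x
    rw [h1, integral_comp_abs]
  have step3 : ∫ v in Set.Ioi (0:ℝ), K v
      = A * (r ^ (2 - 2 * b) / (2 - 2 * b)) + 4 * (r ^ (-(2 * b)) / (2 * b)) := by
    rw [← Set.Ioc_union_Ioi_eq_Ioi hr.le,
      setIntegral_union (Set.Ioc_disjoint_Ioi le_rfl) measurableSet_Ioi hK1 hK2]
    congr 1
    · rw [setIntegral_congr_fun measurableSet_Ioc
        (show Set.EqOn K (fun v : ℝ => A * v ^ (1 - 2 * b)) (Set.Ioc 0 r) from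
          fun v hv => by simp only [hKdef]; rw [if_pos hv.2]),
        MeasureTheory.integral_const_mul, ← intervalIntegral.integral_of_le hr.le,
        integral_rpow (Or.inl (by linarith : (-1:ℝ) < 1 - 2 * b))]
      have h1 : (1 - 2 * b) + 1 = 2 - 2 * b := by ring
      rw [h1, Real.zero_rpow (by linarith : (2:ℝ) - 2 * b ≠ 0), sub_zero]
    · rw [setIntegral_congr_fun measurableSet_Ioi
        (show Set.EqOn K (fun v : ℝ => 4 * v ^ (-(1 + 2 * b))) (Set.Ioi r) from
          fun v hv => by simp only [hKdef]; rw [if_neg (not_le.2 hv)]),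
        MeasureTheory.integral_const_mul, integral_Ioi_rpow_of_lt (by linarith) hr]
      have h1 : -(1 + 2 * b) + 1 = -(2 * b) := by ring
      rw [h1, neg_div_neg_eq]
  have step4 : ∫ y, f y ≤ C * (t * s) ^ (2 * b) := by
    have hX : 0 ≤ (t * s) ^ (2 * b) := Real.rpow_nonneg hts.le _
    have h2b : (2:ℝ) ^ (2 * b) ≤ 4 := by
      have h1 : (2:ℝ) ^ (2 * b) ≤ (2:ℝ) ^ (2:ℝ) :=
        Real.rpow_le_rpow_of_exponent_le one_le_two (by linarith)
      have h2 : (2:ℝ) ^ (2:ℝ) = 4 := by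
        rw [show (2:ℝ) = ((2:ℕ):ℝ) from by norm_num, Real.rpow_natCast]
        norm_num
      linarith
    have hrP : r ^ (-(2 * b)) = (2 * (t * s)) ^ (2 * b) := by
      have h0 : (0:ℝ) ≤ 2 * (t * s) := by positivity
      rw [hrdef, ← Real.rpow_neg_one (2 * (t * s)), ← Real.rpow_mul h0,
        show (-1:ℝ) * (-(2 * b)) = 2 * b from by ring]
    have hP : (2 * (t * s)) ^ (2 * b) = 2 ^ (2 * b) * (t * s) ^ (2 * b) :=
      Real.mul_rpow (by norm_num) hts.le
    have hkey : r ^ (-(2 * b)) ≤ 4 * (t * s) ^ (2 * b) := by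
      rw [hrP, hP]; nlinarith
    have hr2 : r ^ (2 - 2 * b) = r ^ 2 * r ^ (-(2 * b)) := by
      rw [show (2:ℝ) - 2 * b = ((2:ℕ):ℝ) + (-(2 * b)) from by push_cast; ring,
        Real.rpow_add hr, Real.rpow_natCast]
    have hAr : A * r ^ 2 = 4 := by
      have hne : t * s ≠ 0 := hts.ne'
      rw [hAdef, hrdef]
      field_simp
      ring
    have hRnn : 0 ≤ r ^ (-(2 * b)) := Real.rpow_nonneg hr.le _
    have e5 : A * (r ^ (2 - 2 * b) / (2 - 2 * b)) = 4 * r ^ (-(2 * b)) / (2 - 2 * b) := by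
      rw [hr2, ← hAr]; ring
    have hden1 : (0:ℝ) < 2 - 2 * b := by linarith
    have hden2 : (0:ℝ) < 2 * b := by linarith
    calc ∫ y, f y ≤ ∫ y, K (|x - y|) := step1
      _ = 2 * (A * (r ^ (2 - 2 * b) / (2 - 2 * b)) + 4 * (r ^ (-(2 * b)) / (2 * b))) := by
          rw [step2, step3]
      _ = 2 * (4 * r ^ (-(2 * b)) / (2 - 2 * b) + 4 * (r ^ (-(2 * b)) / (2 * b))) := by
          rw [e5]
      _ ≤ 2 * (4 * (4 * (t * s) ^ (2 * b)) / (2 - 2 * b) +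
            4 * ((4 * (t * s) ^ (2 * b)) / (2 * b))) := by
          gcongr
      _ = C * (t * s) ^ (2 * b) := by
          rw [hCdef]
          have hb' : b ≠ 0 := ne_of_gt hb0
          have h1b : (1:ℝ) - b ≠ 0 := by linarith
          field_simp
          ring
  -- take square roots
  have step5 : (∫ y, f y) ^ ((1:ℝ)/2) ≤ Real.sqrt C * (t * s) ^ b := by
    have h := Real.rpow_le_rpow (integral_nonneg hf0) step4 (by norm_num : (0:ℝ) ≤ 1/2)
    have heq : (C * (t * s) ^ (2 * b)) ^ ((1:ℝ)/2) = Real.sqrt C * (t * s) ^ b := by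
      rw [Real.mul_rpow hC.le (Real.rpow_nonneg hts.le _), ← Real.rpow_mul hts.le,
        show 2 * b * ((1:ℝ)/2) = b from by ring, Real.sqrt_eq_rpow]
    rw [← heq]
    exact h
  -- final estimate
  have step6 : (t * s) ^ b ≤ t ^ (b / 2) + t ^ b * |x| ^ b := by
    have h1 : s ^ b ≤ |x| ^ b + u ^ b := by
      rw [hsdef]
      exact my_rpow_add_le _ _ _ (abs_nonneg x) hu.le hb0.le hb1.le
    have h2 : u ^ b = t ^ (-(b / 2)) := by
      rw [hudef, ← Real.rpow_mul ht.le]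
      congr 1
      ring
    have h3 : t ^ b * t ^ (-(b / 2)) = t ^ (b / 2) := by
      rw [← Real.rpow_add ht]
      congr 1
      ring
    have htb : 0 ≤ t ^ b := (Real.rpow_pos_of_pos ht _).le
    calc (t * s) ^ b = t ^ b * s ^ b := Real.mul_rpow ht.le hs.le
      _ ≤ t ^ b * (|x| ^ b + t ^ (-(b / 2))) := by
          rw [← h2]
          exact mul_le_mul_of_nonneg_left h1 htb
      _ = t ^ (b / 2) + t ^ b * |x| ^ b := by rw [mul_add, h3]; ring
  calc (∫ y, f y) ^ ((1:ℝ)/2) ≤ Real.sqrt C * (t * s) ^ b := step5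
    _ ≤ Real.sqrt C * (t ^ (b / 2) + t ^ b * |x| ^ b) :=
        mul_le_mul_of_nonneg_left step6 (Real.sqrt_nonneg C)
end

section
/- Let p ∈ (1,∞) and let f : ℝ → ℝ be a function in L^p(ℝ). Suppose there is a point x₀ ∈ ℝ such that the one-sided limits L⁺ = lim_{x → x₀⁺} f(x) and L⁻ = lim_{x → x₀⁻} f(x) exist and L⁺ ≠ L⁻. Then for every δ > 0, the function x ↦ (∫_ℝ |f(x) − f(y)|² / |x − y|^{1 + 2/p} dy)^{1/2} does not belong to L^p((x₀ − δ, x₀ + δ)); i.e., ∫_{x₀−δ}^{x₀+δ} (∫_ℝ |f(x) − f(y)|² / |x − y|^{1+2/p} dy)^{p/2} dx = ∞. -/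
open MeasureTheory
open scoped ENNReal

lemma lint_inv_zero_top {τ : ℝ} (hτ : 0 < τ) :
    ∫⁻ x in Set.Ioo (0:ℝ) τ, ENNReal.ofReal x⁻¹ = ∞ := by
  by_contra h
  have hint : IntegrableOn (fun x : ℝ => x ^ (-1 : ℝ)) (Set.Ioo (0:ℝ) τ) := by
    constructor
    · exact (by fun_prop : Measurable fun x : ℝ => x ^ (-1:ℝ)).aestronglyMeasurable
    · unfold HasFiniteIntegral
      have heq : ∀ᵐ x ∂(volume.restrict (Set.Ioo (0:ℝ) τ)),
          ‖x ^ (-1:ℝ)‖ₑ = ENNReal.ofReal x⁻¹ := by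
        refine (ae_restrict_iff' measurableSet_Ioo).2 (Filter.Eventually.of_forall ?_)
        intro x hx
        rw [Real.rpow_neg_one, Real.enorm_eq_ofReal (inv_nonneg.2 hx.1.le)]
      rw [lintegral_congr_ae heq]
      exact Ne.lt_top h
  rw [intervalIntegral.integrableOn_Ioo_rpow_iff hτ] at hint
  exact lt_irrefl _ hint

lemma lint_inv_top (a : ℝ) {τ : ℝ} (hτ : 0 < τ) :
    ∫⁻ x in Set.Ioo a (a + τ), ENNReal.ofReal (x - a)⁻¹ = ∞ := by
  have hmp : MeasurePreserving (fun x : ℝ => x + a) volume volume :=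
    measurePreserving_add_right volume a
  have hemb : MeasurableEmbedding (fun x : ℝ => x + a) :=
    (MeasurableEquiv.addRight a).measurableEmbedding
  have hpre : (fun x : ℝ => x + a) ⁻¹' Set.Ioo a (a + τ) = Set.Ioo 0 τ := by
    ext x
    simp only [Set.mem_preimage, Set.mem_Ioo]
    constructor <;> (intro ⟨h1, h2⟩; constructor <;> linarith)
  have hh := hmp.setLIntegral_comp_preimage_emb hemb
    (fun x => ENNReal.ofReal (x - a)⁻¹) (Set.Ioo a (a + τ))
  rw [hpre] at hh
  rw [← hh]
  simp only [add_sub_cancel_right]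
  exact lint_inv_zero_top hτ

/-- An `L^p` function with a jump discontinuity at `x₀` has Stein derivative of order
`1/p` failing to be locally `L^p` near `x₀`: for every `δ > 0`,
`∫_{x₀−δ}^{x₀+δ} (∫ |f(x)−f(y)|²/|x−y|^{1+2/p} dy)^{p/2} dx = ∞`. -/
theorem jump_not_locally_Lp (p : ℝ) (hp : 1 < p) (f : ℝ → ℝ)
    (hf : MemLp f (ENNReal.ofReal p) volume)
    (x₀ Lplus Lminus : ℝ)
    (hplus : Filter.Tendsto f (nhdsWithin x₀ (Set.Ioi x₀)) (nhds Lplus))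
    (hminus : Filter.Tendsto f (nhdsWithin x₀ (Set.Iio x₀)) (nhds Lminus))
    (hne : Lplus ≠ Lminus) (δ : ℝ) (hδ : 0 < δ) :
    ∫⁻ x in Set.Ioo (x₀ - δ) (x₀ + δ),
        (∫⁻ y, ENNReal.ofReal (|f x - f y| ^ 2) / ENNReal.ofReal (|x - y| ^ (1 + 2 / p)))
          ^ (p / 2) = ∞ := by
  have hp0 : 0 < p := lt_trans one_pos hp
  set c : ℝ := |Lplus - Lminus| with hcdef
  have hc : 0 < c := abs_pos.2 (sub_ne_zero.2 hne)
  obtain ⟨η₁, hη₁, H₁⟩ := Metric.tendsto_nhdsWithin_nhds.1 hplus (c/4) (by positivity)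
  obtain ⟨η₂, hη₂, H₂⟩ := Metric.tendsto_nhdsWithin_nhds.1 hminus (c/4) (by positivity)
  set τ : ℝ := min δ (min η₁ η₂) with hτdef
  have hτ : 0 < τ := lt_min hδ (lt_min hη₁ hη₂)
  have hτδ : τ ≤ δ := min_le_left _ _
  have hτ1 : τ ≤ η₁ := le_trans (min_le_right _ _) (min_le_left _ _)
  have hτ2 : τ ≤ η₂ := le_trans (min_le_right _ _) (min_le_right _ _)
  set D : ℝ := (c/2)^2 / 2 ^ (1 + 2/p) with hDdef
  have hD : 0 < D := by positivity
  set K : ℝ := D ^ (p/2) with hKdef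
  have hK : 0 < K := by positivity
  -- key pointwise lower bound
  have key : ∀ x ∈ Set.Ioo x₀ (x₀ + τ),
      ENNReal.ofReal K * ENNReal.ofReal (x - x₀)⁻¹ ≤
        (∫⁻ y, ENNReal.ofReal (|f x - f y| ^ 2) /
            ENNReal.ofReal (|x - y| ^ (1 + 2 / p))) ^ (p / 2) := by
    intro x hx
    set t : ℝ := x - x₀ with htdef
    have ht : 0 < t := sub_pos.2 hx.1
    have htτ : t < τ := by simp only [htdef]; linarith [hx.2]
    have hfx : |f x - Lplus| < c/4 := by
      have := H₁ (x := x) hx.1 (by rw [Real.dist_eq]; rw [abs_of_pos ht]; linarith)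
      rwa [Real.dist_eq] at this
    -- inner lower bound
    have hinner : ENNReal.ofReal (D / t ^ (2/p)) ≤
        ∫⁻ y, ENNReal.ofReal (|f x - f y| ^ 2) /
            ENNReal.ofReal (|x - y| ^ (1 + 2 / p)) := by
      have step1 : ∫⁻ y in Set.Ioo (x₀ - t) x₀,
          ENNReal.ofReal (|f x - f y| ^ 2) / ENNReal.ofReal (|x - y| ^ (1 + 2 / p)) ≤
          ∫⁻ y, ENNReal.ofReal (|f x - f y| ^ 2) /
            ENNReal.ofReal (|x - y| ^ (1 + 2 / p)) :=
        setLIntegral_le_lintegral _ _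
      have step2 : ∫⁻ _ in Set.Ioo (x₀ - t) x₀,
          (ENNReal.ofReal ((c/2)^2) / ENNReal.ofReal ((2*t) ^ (1 + 2/p))) ≤
          ∫⁻ y in Set.Ioo (x₀ - t) x₀,
          ENNReal.ofReal (|f x - f y| ^ 2) / ENNReal.ofReal (|x - y| ^ (1 + 2 / p)) := by
        refine lintegral_mono_ae ((ae_restrict_iff' measurableSet_Ioo).2
          (Filter.Eventually.of_forall ?_))
        intro y hy
        have hy1 : x₀ - t < y := hy.1
        have hy2 : y < x₀ := hy.2
        have hfy : |f y - Lminus| < c/4 := by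
          have := H₂ (x := y) hy2 (by rw [Real.dist_eq, abs_of_neg (by linarith : y - x₀ < 0)]; linarith)
          rwa [Real.dist_eq] at this
        have hjump : c/2 ≤ |f x - f y| := by
          have htri : c ≤ |Lplus - f x| + |f x - f y| + |f y - Lminus| := by
            calc c = |Lplus - Lminus| := hcdef
            _ = |(Lplus - f x) + (f x - f y) + (f y - Lminus)| := by ring_nf
            _ ≤ |(Lplus - f x) + (f x - f y)| + |f y - Lminus| := abs_add_le _ _
            _ ≤ |Lplus - f x| + |f x - f y| + |f y - Lminus| := by
                have := abs_add_le (Lplus - f x) (f x - f y); linarith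
          rw [abs_sub_comm Lplus (f x)] at htri
          linarith
        have hxy : |x - y| ≤ 2 * t := by
          rw [abs_of_pos (by linarith : 0 < x - y)]
          simp only [htdef]; linarith
        refine ENNReal.div_le_div (ENNReal.ofReal_le_ofReal ?_) (ENNReal.ofReal_le_ofReal ?_)
        · calc (c/2)^2 ≤ |f x - f y|^2 := by
                apply pow_le_pow_left₀ (by positivity) hjump
          _ = |f x - f y|^2 := rfl
        · exact Real.rpow_le_rpow (abs_nonneg _) hxy (by positivity)
      have hBpos : (0:ℝ) < (2*t) ^ (1 + 2/p) := by positivity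
      have hconst : ∫⁻ _ in Set.Ioo (x₀ - t) x₀,
          (ENNReal.ofReal ((c/2)^2) / ENNReal.ofReal ((2*t) ^ (1 + 2/p)))
          = ENNReal.ofReal (D / t ^ (2/p)) := by
        rw [setLIntegral_const, Real.volume_Ioo]
        rw [← ENNReal.ofReal_div_of_pos hBpos, ← ENNReal.ofReal_mul (by positivity)]
        congr 1
        · have h1 : (2*t) ^ (1 + 2/p) = 2 ^ (1 + 2/p) * t ^ (1 + 2/p) :=
            Real.mul_rpow (by norm_num) ht.le
          have h2 : t ^ (1 + 2/p) = t * t ^ (2/p) := by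
            rw [Real.rpow_add ht, Real.rpow_one]
          have h3 : (0:ℝ) < 2 ^ (1 + 2/p) := by positivity
          have h4 : (0:ℝ) < t ^ (2/p) := Real.rpow_pos_of_pos ht _
          rw [h1, h2, hDdef]
          have : x₀ - (x₀ - t) = t := by ring
          rw [this]
          field_simp
      calc ENNReal.ofReal (D / t ^ (2/p)) = _ := hconst.symm
      _ ≤ _ := step2
      _ ≤ _ := step1
    -- raise to the power p/2
    have hpos : (0:ℝ) < D / t ^ (2/p) := by positivity
    have hpow : ENNReal.ofReal K * ENNReal.ofReal t⁻¹ =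
        (ENNReal.ofReal (D / t ^ (2/p))) ^ (p/2) := by
      rw [ENNReal.ofReal_rpow_of_pos hpos]
      rw [← ENNReal.ofReal_mul hK.le]
      congr 1
      rw [Real.div_rpow hD.le (Real.rpow_pos_of_pos ht _).le]
      rw [← Real.rpow_mul ht.le, (by field_simp : (2/p) * (p/2) = 1), Real.rpow_one,
        hKdef]
      ring
    rw [hpow]
    exact ENNReal.rpow_le_rpow hinner (by positivity)
  -- main chain
  have hsub : Set.Ioo x₀ (x₀ + τ) ⊆ Set.Ioo (x₀ - δ) (x₀ + δ) := by
    intro x hx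
    constructor
    · linarith [hx.1]
    · linarith [hx.2]
  have main : ∫⁻ x in Set.Ioo x₀ (x₀ + τ),
      ENNReal.ofReal K * ENNReal.ofReal (x - x₀)⁻¹ = ∞ := by
    rw [lintegral_const_mul' _ _ ENNReal.ofReal_ne_top]
    rw [lint_inv_top x₀ hτ]
    exact ENNReal.mul_top (ENNReal.ofReal_pos.2 hK).ne'
  refine eq_top_iff.2 ?_
  calc (⊤:ℝ≥0∞) = ∫⁻ x in Set.Ioo x₀ (x₀ + τ),
        ENNReal.ofReal K * ENNReal.ofReal (x - x₀)⁻¹ := main.symm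
  _ ≤ ∫⁻ x in Set.Ioo x₀ (x₀ + τ),
        (∫⁻ y, ENNReal.ofReal (|f x - f y| ^ 2) /
            ENNReal.ofReal (|x - y| ^ (1 + 2 / p))) ^ (p / 2) :=
      lintegral_mono_ae ((ae_restrict_iff' measurableSet_Ioo).2
        (Filter.Eventually.of_forall key))
  _ ≤ _ := lintegral_mono' (Measure.restrict_mono hsub le_rfl) le_rfl
end

section
/- Let w : ℝ² → ℝ be a three-times continuously differentiable function such that all of its first-, second-, and third-order partial derivatives are bounded on ℝ². For λ ∈ (0,1) define w_λ(x,y) = w(x,y) · exp(−λ(x² + y²)). Then there exist constants c₁, c₂, c₃ > 0, independent of λ, such that for every λ ∈ (0,1): every first-order partial derivative of w_λ is bounded by c₁ on ℝ², every second-order partial derivative of w_λ is bounded by c₂ on ℝ², and every third-order partial derivative of w_λ is bounded by c₃ on ℝ². -/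
open Real

/-- |t|^k e^{-t²} ≤ 1 + k! -/
lemma gauss_pow_bound (k : ℕ) (t : ℝ) :
    |t| ^ k * Real.exp (-t ^ 2) ≤ 1 + k.factorial := by
  have hfac : (0:ℝ) < k.factorial := by exact_mod_cast k.factorial_pos
  have he : (t ^ 2) ^ k / k.factorial ≤ Real.exp (t ^ 2) := by
    calc (t ^ 2) ^ k / k.factorial
        ≤ ∑ i ∈ Finset.range (k + 1), (t ^ 2) ^ i / i.factorial := by
          refine Finset.single_le_sum (f := fun i => (t ^ 2) ^ i / (i.factorial : ℝ)) ?_ ?_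
          · intro i _
            positivity
          · exact Finset.self_mem_range_succ k
      _ ≤ Real.exp (t ^ 2) := by
          simpa using Real.sum_le_exp_of_nonneg (sq_nonneg t) (k + 1)
  have h2k : |t| ^ (2 * k) * Real.exp (-t ^ 2) ≤ k.factorial := by
    have : |t| ^ (2 * k) = (t ^ 2) ^ k := by
      rw [pow_mul, sq_abs]
    rw [this, Real.exp_neg]
    rw [div_le_iff₀ hfac] at he
    calc (t ^ 2) ^ k * (Real.exp (t ^ 2))⁻¹
        ≤ (Real.exp (t ^ 2) * k.factorial) * (Real.exp (t ^ 2))⁻¹ := by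
          gcongr
      _ = k.factorial := by
          field_simp
  rcases le_or_gt (|t|) 1 with h | h
  · have h1 : |t| ^ k ≤ 1 := pow_le_one₀ (abs_nonneg t) h
    have h2 : Real.exp (-t ^ 2) ≤ 1 := Real.exp_le_one_iff.mpr (by nlinarith [sq_nonneg t])
    nlinarith [Real.exp_pos (-t^2), pow_nonneg (abs_nonneg t) k]
  · have h1 : |t| ^ k ≤ |t| ^ (2 * k) := by
      apply pow_le_pow_right₀ h.le
      omega
    nlinarith [Real.exp_pos (-t^2)]

noncomputable def hg : ℝ → ℝ := fun t => Real.exp (-t ^ 2)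

lemma hg_contDiff : ContDiff ℝ ⊤ hg :=
  Real.contDiff_exp.comp ((contDiff_id.pow 2).neg)

lemma hasDerivAt_neg_sq (t : ℝ) : HasDerivAt (fun t : ℝ => -t ^ 2) (-(2 * t)) t := by
  simpa using (hasDerivAt_pow 2 t).fun_neg

lemma hg_deriv1 : deriv hg = fun t => -(2 * t) * Real.exp (-t ^ 2) := by
  funext t
  have : HasDerivAt hg (Real.exp (-t ^ 2) * -(2 * t)) t := (hasDerivAt_neg_sq t).exp
  rw [this.deriv]; ring

lemma hg_deriv2 : deriv (fun t => -(2 * t) * Real.exp (-t ^ 2)) =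
    fun t => (4 * t ^ 2 - 2) * Real.exp (-t ^ 2) := by
  funext t
  have h1 : HasDerivAt (fun t : ℝ => -(2 * t)) (-2) t := by
    simpa using (hasDerivAt_id t).const_mul (2:ℝ) |>.fun_neg
  have h2 : HasDerivAt (fun t : ℝ => Real.exp (-t ^ 2)) (Real.exp (-t ^ 2) * -(2 * t)) t :=
    (hasDerivAt_neg_sq t).exp
  have := h1.fun_mul h2
  rw [this.deriv]; ring

lemma hg_deriv3 : deriv (fun t => (4 * t ^ 2 - 2) * Real.exp (-t ^ 2)) =
    fun t => (12 * t - 8 * t ^ 3) * Real.exp (-t ^ 2) := by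
  funext t
  have h1 : HasDerivAt (fun t : ℝ => 4 * t ^ 2 - 2) (4 * (2 * t)) t := by
    simpa using ((hasDerivAt_pow 2 t).const_mul (4:ℝ)).sub_const 2
  have h2 : HasDerivAt (fun t : ℝ => Real.exp (-t ^ 2)) (Real.exp (-t ^ 2) * -(2 * t)) t :=
    (hasDerivAt_neg_sq t).exp
  have := h1.fun_mul h2
  rw [this.deriv]; ring

lemma hg_iteratedDeriv :
    (iteratedDeriv 1 hg = fun t => -(2 * t) * Real.exp (-t ^ 2)) ∧
    (iteratedDeriv 2 hg = fun t => (4 * t ^ 2 - 2) * Real.exp (-t ^ 2)) ∧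
    (iteratedDeriv 3 hg = fun t => (12 * t - 8 * t ^ 3) * Real.exp (-t ^ 2)) := by
  have e1 : iteratedDeriv 1 hg = fun t => -(2 * t) * Real.exp (-t ^ 2) := by
    rw [iteratedDeriv_one, hg_deriv1]
  have e2 : iteratedDeriv 2 hg = fun t => (4 * t ^ 2 - 2) * Real.exp (-t ^ 2) := by
    rw [show iteratedDeriv 2 hg = deriv (iteratedDeriv 1 hg) from iteratedDeriv_succ, e1, hg_deriv2]
  have e3 : iteratedDeriv 3 hg = fun t => (12 * t - 8 * t ^ 3) * Real.exp (-t ^ 2) := by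
    rw [show iteratedDeriv 3 hg = deriv (iteratedDeriv 2 hg) from iteratedDeriv_succ, e2, hg_deriv3]
  exact ⟨e1, e2, e3⟩

lemma hg_decay {n : ℕ} (hn : n ≤ 3) (t : ℝ) :
    (1 + |t|) * ‖iteratedFDeriv ℝ n hg t‖ ≤ 316 := by
  obtain ⟨e1, e2, e3⟩ := hg_iteratedDeriv
  have hE := Real.exp_pos (-t ^ 2)
  have hA := abs_nonneg t
  have k0 := gauss_pow_bound 0 t
  have k1 := gauss_pow_bound 1 t
  have k2 := gauss_pow_bound 2 t
  have k3 := gauss_pow_bound 3 t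
  have k4 := gauss_pow_bound 4 t
  simp only [pow_zero, one_mul, pow_one] at k0 k1
  norm_num [Nat.factorial] at k0 k1 k2 k3 k4
  rw [norm_iteratedFDeriv_eq_norm_iteratedDeriv]
  interval_cases n
  · simp only [iteratedDeriv_zero, hg, Real.norm_eq_abs,
      abs_of_pos hE]
    nlinarith
  · rw [e1]
    simp only [Real.norm_eq_abs, abs_mul, abs_of_pos hE, abs_neg]
    rw [show |(2:ℝ)| = 2 by norm_num]
    nlinarith [sq_abs t]
  · rw [e2]
    simp only [Real.norm_eq_abs, abs_mul, abs_of_pos hE]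
    have h4 : |4 * t ^ 2 - 2| ≤ 4 * |t| ^ 2 + 2 := by
      rw [← sq_abs] at *
      calc |4 * |t| ^ 2 - 2| ≤ |4 * |t| ^ 2| + |(2:ℝ)| := abs_sub _ _
        _ = 4 * |t| ^ 2 + 2 := by
            rw [abs_of_nonneg (by positivity)]; norm_num
    nlinarith [mul_le_mul_of_nonneg_right h4 hE.le, sq_abs t,
      pow_nonneg hA 2, pow_nonneg hA 3]
  · rw [e3]
    simp only [Real.norm_eq_abs, abs_mul, abs_of_pos hE]
    have h4 : |12 * t - 8 * t ^ 3| ≤ 12 * |t| + 8 * |t| ^ 3 := by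
      calc |12 * t - 8 * t ^ 3| ≤ |12 * t| + |8 * t ^ 3| := abs_sub _ _
        _ = 12 * |t| + 8 * |t| ^ 3 := by
            rw [abs_mul, abs_mul, abs_pow]; norm_num
    nlinarith [mul_le_mul_of_nonneg_right h4 hE.le,
      pow_nonneg hA 2, pow_nonneg hA 3, pow_nonneg hA 4]




noncomputable def Gg : ℝ × ℝ → ℝ := fun p => hg p.1 * hg p.2

lemma hg3 : ContDiff ℝ 3 hg := hg_contDiff.of_le le_top

lemma Gg_contDiff : ContDiff ℝ 3 Gg :=
  (hg3.comp contDiff_fst).mul (hg3.comp contDiff_snd)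

lemma comp_fst_bound (i : ℕ) (hi : i ≤ 3) (p : ℝ × ℝ) :
    ‖iteratedFDeriv ℝ i (fun q : ℝ × ℝ => hg q.1) p‖ ≤ ‖iteratedFDeriv ℝ i hg p.1‖ := by
  have h := (ContinuousLinearMap.fst ℝ ℝ ℝ).iteratedFDeriv_comp_right
    (f := hg) hg3 p (i := i) (by exact_mod_cast hi)
  have he : (fun q : ℝ × ℝ => hg q.1) = hg ∘ (ContinuousLinearMap.fst ℝ ℝ ℝ) := rfl
  rw [he, h]
  refine le_trans (ContinuousMultilinearMap.norm_compContinuousLinearMap_le _ _) ?_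
  have hone : ∏ _j : Fin i, ‖ContinuousLinearMap.fst ℝ ℝ ℝ‖ ≤ 1 :=
    Finset.prod_le_one (fun j _ => norm_nonneg _) (fun j _ => ContinuousLinearMap.norm_fst_le ℝ ℝ ℝ)
  exact le_trans (mul_le_mul_of_nonneg_left hone (norm_nonneg _)) (le_of_eq (mul_one _))

lemma comp_snd_bound (i : ℕ) (hi : i ≤ 3) (p : ℝ × ℝ) :
    ‖iteratedFDeriv ℝ i (fun q : ℝ × ℝ => hg q.2) p‖ ≤ ‖iteratedFDeriv ℝ i hg p.2‖ := by
  have h := (ContinuousLinearMap.snd ℝ ℝ ℝ).iteratedFDeriv_comp_right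
    (f := hg) hg3 p (i := i) (by exact_mod_cast hi)
  have he : (fun q : ℝ × ℝ => hg q.2) = hg ∘ (ContinuousLinearMap.snd ℝ ℝ ℝ) := rfl
  rw [he, h]
  refine le_trans (ContinuousMultilinearMap.norm_compContinuousLinearMap_le _ _) ?_
  have hone : ∏ _j : Fin i, ‖ContinuousLinearMap.snd ℝ ℝ ℝ‖ ≤ 1 :=
    Finset.prod_le_one (fun j _ => norm_nonneg _) (fun j _ => ContinuousLinearMap.norm_snd_le ℝ ℝ ℝ)
  exact le_trans (mul_le_mul_of_nonneg_left hone (norm_nonneg _)) (le_of_eq (mul_one _))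

lemma Gg_decay {n : ℕ} (hn : n ≤ 3) (p : ℝ × ℝ) :
    (1 + ‖p‖) * ‖iteratedFDeriv ℝ n Gg p‖ ≤ 798848 := by
  have hp : (0:ℝ) ≤ 1 + ‖p‖ := by positivity
  have hmul := norm_iteratedFDeriv_mul_le (𝕜 := ℝ)
    (f := fun q : ℝ × ℝ => hg q.1) (g := fun q : ℝ × ℝ => hg q.2) (N := 3)
    (hg3.comp contDiff_fst) (hg3.comp contDiff_snd) p (n := n) (by exact_mod_cast hn)
  have key : ∀ i ∈ Finset.range (n + 1),
      (n.choose i : ℝ) * ((1 + ‖p‖) * (‖iteratedFDeriv ℝ i (fun q : ℝ × ℝ => hg q.1) p‖ *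
        ‖iteratedFDeriv ℝ (n - i) (fun q : ℝ × ℝ => hg q.2) p‖))
        ≤ (n.choose i : ℝ) * (316 * 316) := by
    intro i hi
    rw [Finset.mem_range] at hi
    have hi3 : i ≤ 3 := by omega
    have hni3 : n - i ≤ 3 := by omega
    refine mul_le_mul_of_nonneg_left ?_ (Nat.cast_nonneg _)
    have hsplit : 1 + ‖p‖ ≤ (1 + |p.1|) * (1 + |p.2|) := by
      have : ‖p‖ ≤ |p.1| + |p.2| := by
        rw [Prod.norm_def]
        simp only [Real.norm_eq_abs]
        exact max_le (le_add_of_nonneg_right (abs_nonneg _))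
          (le_add_of_nonneg_left (abs_nonneg _))
      nlinarith [abs_nonneg p.1, abs_nonneg p.2]
    calc (1 + ‖p‖) * (‖iteratedFDeriv ℝ i (fun q : ℝ × ℝ => hg q.1) p‖ *
          ‖iteratedFDeriv ℝ (n - i) (fun q : ℝ × ℝ => hg q.2) p‖)
        ≤ ((1 + |p.1|) * (1 + |p.2|)) * (‖iteratedFDeriv ℝ i hg p.1‖ *
          ‖iteratedFDeriv ℝ (n - i) hg p.2‖) := by
          apply mul_le_mul hsplit (mul_le_mul (comp_fst_bound i hi3 p)
            (comp_snd_bound (n - i) hni3 p) (norm_nonneg _) (norm_nonneg _))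
            (by positivity) (by positivity)
      _ = ((1 + |p.1|) * ‖iteratedFDeriv ℝ i hg p.1‖) *
          ((1 + |p.2|) * ‖iteratedFDeriv ℝ (n - i) hg p.2‖) := by ring
      _ ≤ 316 * 316 := by
          apply mul_le_mul (hg_decay hi3 p.1) (hg_decay hni3 p.2) (by positivity) (by norm_num)
  calc (1 + ‖p‖) * ‖iteratedFDeriv ℝ n Gg p‖
      ≤ (1 + ‖p‖) * ∑ i ∈ Finset.range (n + 1), (n.choose i : ℝ) *
        ‖iteratedFDeriv ℝ i (fun q : ℝ × ℝ => hg q.1) p‖ *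
        ‖iteratedFDeriv ℝ (n - i) (fun q : ℝ × ℝ => hg q.2) p‖ := by
        exact mul_le_mul_of_nonneg_left hmul hp
    _ = ∑ i ∈ Finset.range (n + 1), (n.choose i : ℝ) *
        ((1 + ‖p‖) * (‖iteratedFDeriv ℝ i (fun q : ℝ × ℝ => hg q.1) p‖ *
        ‖iteratedFDeriv ℝ (n - i) (fun q : ℝ × ℝ => hg q.2) p‖)) := by
        rw [Finset.mul_sum]; congr 1; funext i; ring
    _ ≤ ∑ i ∈ Finset.range (n + 1), (n.choose i : ℝ) * (316 * 316) :=
        Finset.sum_le_sum key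
    _ = (2 ^ n : ℕ) * (316 * 316) := by
        rw [← Finset.sum_mul]
        congr 1
        rw [← Nat.cast_sum]
        norm_cast
        exact Nat.sum_range_choose n
    _ ≤ 798848 := by
        have h2 : (2:ℝ) ^ n ≤ 2 ^ 3 := pow_le_pow_right₀ (by norm_num) hn
        push_cast
        nlinarith [h2]



noncomputable def cmap (l : ℝ) : (ℝ × ℝ) →L[ℝ] (ℝ × ℝ) :=
  Real.sqrt l • ContinuousLinearMap.id ℝ (ℝ × ℝ)

lemma cmap_apply (l : ℝ) (q : ℝ × ℝ) : cmap l q = Real.sqrt l • q := rfl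

lemma gl_eq (l : ℝ) (hl : l ∈ Set.Ioo (0:ℝ) 1) :
    (fun q : ℝ × ℝ => Real.exp (-l * (q.1 ^ 2 + q.2 ^ 2))) = fun q => Gg (cmap l q) := by
  funext q
  have hs2 : Real.sqrt l ^ 2 = l := Real.sq_sqrt hl.1.le
  simp only [Gg, hg, cmap_apply, Prod.smul_fst, Prod.smul_snd, smul_eq_mul, ← Real.exp_add]
  congr 1
  linear_combination (q.1 ^ 2 + q.2 ^ 2) * hs2

lemma cmap_norm_le (l : ℝ) (hl : l ∈ Set.Ioo (0:ℝ) 1) : ‖cmap l‖ ≤ Real.sqrt l := by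
  refine le_trans (ContinuousLinearMap.opNorm_smul_le _ _) ?_
  rw [Real.norm_eq_abs, abs_of_nonneg (Real.sqrt_nonneg l)]
  calc Real.sqrt l * ‖ContinuousLinearMap.id ℝ (ℝ × ℝ)‖ ≤ Real.sqrt l * 1 := by
        exact mul_le_mul_of_nonneg_left ContinuousLinearMap.norm_id_le (Real.sqrt_nonneg l)
    _ = Real.sqrt l := mul_one _

lemma sqrt_le_one' (l : ℝ) (hl : l ∈ Set.Ioo (0:ℝ) 1) : Real.sqrt l ≤ 1 := by
  rw [show (1:ℝ) = Real.sqrt 1 by simp]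
  exact Real.sqrt_le_sqrt hl.2.le

lemma gl_deriv_le (l : ℝ) (hl : l ∈ Set.Ioo (0:ℝ) 1) {n : ℕ} (hn : n ≤ 3) (x : ℝ × ℝ) :
    ‖iteratedFDeriv ℝ n (fun q => Gg (cmap l q)) x‖ ≤
      Real.sqrt l ^ n * ‖iteratedFDeriv ℝ n Gg (cmap l x)‖ := by
  have h := (cmap l).iteratedFDeriv_comp_right (f := Gg) Gg_contDiff x (i := n)
    (by exact_mod_cast hn)
  have he : (fun q => Gg (cmap l q)) = Gg ∘ (cmap l) := rfl
  rw [he, h]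
  refine le_trans (ContinuousMultilinearMap.norm_compContinuousLinearMap_le _ _) ?_
  have hprod : ∏ _j : Fin n, ‖cmap l‖ ≤ Real.sqrt l ^ n := by
    rw [Finset.prod_const, Finset.card_univ, Fintype.card_fin]
    exact pow_le_pow_left₀ (norm_nonneg _) (cmap_norm_le l hl) n
  calc ‖iteratedFDeriv ℝ n Gg ((cmap l) x)‖ * ∏ _j : Fin n, ‖cmap l‖
      ≤ ‖iteratedFDeriv ℝ n Gg ((cmap l) x)‖ * Real.sqrt l ^ n :=
        mul_le_mul_of_nonneg_left hprod (norm_nonneg _)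
    _ = _ := mul_comm _ _

/-- unweighted bound -/
lemma gl_bound (l : ℝ) (hl : l ∈ Set.Ioo (0:ℝ) 1) {n : ℕ} (hn : n ≤ 3) (x : ℝ × ℝ) :
    ‖iteratedFDeriv ℝ n (fun q => Gg (cmap l q)) x‖ ≤ 798848 := by
  have h := gl_deriv_le l hl hn x
  have hs0 := Real.sqrt_nonneg l
  have hs1 := sqrt_le_one' l hl
  have hG : ‖iteratedFDeriv ℝ n Gg (cmap l x)‖ ≤ 798848 := by
    have := Gg_decay hn (cmap l x)
    nlinarith [norm_nonneg (iteratedFDeriv ℝ n Gg (cmap l x)), norm_nonneg (cmap l x)]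
  have hp : Real.sqrt l ^ n ≤ 1 := pow_le_one₀ hs0 hs1
  nlinarith [norm_nonneg (iteratedFDeriv ℝ n Gg (cmap l x)),
    pow_nonneg hs0 n]

/-- weighted bound, for `1 ≤ n` -/
lemma gl_bound_weighted (l : ℝ) (hl : l ∈ Set.Ioo (0:ℝ) 1) {n : ℕ} (h1 : 1 ≤ n) (hn : n ≤ 3)
    (x : ℝ × ℝ) :
    (1 + ‖x‖) * ‖iteratedFDeriv ℝ n (fun q => Gg (cmap l q)) x‖ ≤ 798848 := by
  have h := gl_deriv_le l hl hn x
  have hs0 := Real.sqrt_nonneg l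
  have hs1 := sqrt_le_one' l hl
  have hx0 := norm_nonneg x
  have hG0 := norm_nonneg (iteratedFDeriv ℝ n Gg (cmap l x))
  have hGd := Gg_decay hn (cmap l x)
  have hnorm : ‖cmap l x‖ = Real.sqrt l * ‖x‖ := by
    rw [cmap_apply, norm_smul, Real.norm_eq_abs, abs_of_nonneg hs0]
  -- (1+‖x‖) * s^n ≤ s^(n-1) * (1 + ‖cmap l x‖) ≤ 1 + ‖cmap l x‖
  have hpow : Real.sqrt l ^ n ≤ Real.sqrt l ^ 1 := pow_le_pow_of_le_one hs0 hs1 h1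
  have key : (1 + ‖x‖) * Real.sqrt l ^ n ≤ 1 + ‖cmap l x‖ := by
    rw [hnorm]
    have e1 : (1 + ‖x‖) * Real.sqrt l ^ n ≤ (1 + ‖x‖) * Real.sqrt l := by
      have := pow_le_pow_of_le_one hs0 hs1 h1
      simp only [pow_one] at this
      exact mul_le_mul_of_nonneg_left this (by positivity)
    nlinarith
  calc (1 + ‖x‖) * ‖iteratedFDeriv ℝ n (fun q => Gg (cmap l q)) x‖
      ≤ (1 + ‖x‖) * (Real.sqrt l ^ n * ‖iteratedFDeriv ℝ n Gg (cmap l x)‖) :=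
        mul_le_mul_of_nonneg_left h (by positivity)
    _ = ((1 + ‖x‖) * Real.sqrt l ^ n) * ‖iteratedFDeriv ℝ n Gg (cmap l x)‖ := by ring
    _ ≤ (1 + ‖cmap l x‖) * ‖iteratedFDeriv ℝ n Gg (cmap l x)‖ :=
        mul_le_mul_of_nonneg_right key hG0
    _ ≤ 798848 := hGd

open MeasureTheory

/-- If `w : ℝ² → ℝ` is `C³` with all partial derivatives of orders 1, 2, 3 bounded, then
the Gaussian-truncated weights `w_λ(x,y) = w(x,y) e^{−λ(x²+y²)}`, `λ ∈ (0,1)`, have all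
their derivatives of orders 1, 2, 3 bounded uniformly in `λ`. -/
theorem truncated_weight_derivatives_bounded (w : ℝ × ℝ → ℝ) (hw : ContDiff ℝ 3 w)
    (h1 : ∃ C : ℝ, ∀ p : ℝ × ℝ, ‖iteratedFDeriv ℝ 1 w p‖ ≤ C)
    (h2 : ∃ C : ℝ, ∀ p : ℝ × ℝ, ‖iteratedFDeriv ℝ 2 w p‖ ≤ C)
    (h3 : ∃ C : ℝ, ∀ p : ℝ × ℝ, ‖iteratedFDeriv ℝ 3 w p‖ ≤ C) :
    ∃ c₁ c₂ c₃ : ℝ, 0 < c₁ ∧ 0 < c₂ ∧ 0 < c₃ ∧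
      ∀ l : ℝ, l ∈ Set.Ioo (0 : ℝ) 1 →
        (∀ p : ℝ × ℝ,
            ‖iteratedFDeriv ℝ 1 (fun q : ℝ × ℝ => w q * Real.exp (-l * (q.1 ^ 2 + q.2 ^ 2))) p‖
              ≤ c₁) ∧
        (∀ p : ℝ × ℝ,
            ‖iteratedFDeriv ℝ 2 (fun q : ℝ × ℝ => w q * Real.exp (-l * (q.1 ^ 2 + q.2 ^ 2))) p‖
              ≤ c₂) ∧
        (∀ p : ℝ × ℝ,
            ‖iteratedFDeriv ℝ 3 (fun q : ℝ × ℝ => w q * Real.exp (-l * (q.1 ^ 2 + q.2 ^ 2))) p‖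
              ≤ c₃) := by
  obtain ⟨C1, hC1⟩ := h1
  obtain ⟨C2, hC2⟩ := h2
  obtain ⟨C3, hC3⟩ := h3
  have hC1' : 0 ≤ C1 := le_trans (norm_nonneg _) (hC1 0)
  have hC2' : 0 ≤ C2 := le_trans (norm_nonneg _) (hC2 0)
  have hC3' : 0 ≤ C3 := le_trans (norm_nonneg _) (hC3 0)
  set M : ℝ := 798848 with hM
  set K : ℝ := |w 0| + C1 with hKdef
  have hK0 : 0 ≤ K := by positivity
  -- linear growth of w
  have hK : ∀ x : ℝ × ℝ, |w x| ≤ K * (1 + ‖x‖) := by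
    intro x
    have hd : ∀ y ∈ Set.univ, DifferentiableAt ℝ w y := fun y _ =>
      (hw.differentiable (by norm_num)).differentiableAt
    have hb : ∀ y ∈ Set.univ, ‖fderiv ℝ w y‖ ≤ C1 := by
      intro y _
      have e : ‖fderiv ℝ w y‖ = ‖iteratedFDeriv ℝ (0 + 1) w y‖ := by
        rw [← norm_iteratedFDeriv_fderiv, norm_iteratedFDeriv_zero]
      rw [e]
      exact hC1 y
    have hmv := convex_univ.norm_image_sub_le_of_norm_fderiv_le hd hb
      (Set.mem_univ (0 : ℝ × ℝ)) (Set.mem_univ x)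
    rw [sub_zero, Real.norm_eq_abs] at hmv
    have : |w x| ≤ |w x - w 0| + |w 0| := by
      calc |w x| = |(w x - w 0) + w 0| := by ring_nf
        _ ≤ |w x - w 0| + |w 0| := abs_add_le _ _
    nlinarith [norm_nonneg x, abs_nonneg (w 0)]
  set Cm : ℝ := max (max C1 C2) (max C3 1) with hCm
  have hCm0 : (0:ℝ) ≤ Cm := le_trans zero_le_one (le_max_of_le_right (le_max_right _ _))
  have hCm1 : C1 ≤ Cm := le_max_of_le_left (le_max_left _ _)
  have hCm2 : C2 ≤ Cm := le_max_of_le_left (le_max_right _ _)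
  have hCm3 : C3 ≤ Cm := le_max_of_le_right (le_max_left _ _)
  have hCmge1 : (1:ℝ) ≤ Cm := le_max_of_le_right (le_max_right _ _)
  set c : ℝ := K * M + 8 * Cm * M with hc
  have hcpos : 0 < c := by
    have : (0:ℝ) ≤ K * M := by positivity
    nlinarith
  refine ⟨c, c, c, hcpos, hcpos, hcpos, ?_⟩
  intro l hl
  have hfun : (fun q : ℝ × ℝ => w q * Real.exp (-l * (q.1 ^ 2 + q.2 ^ 2)))
      = fun q => w q * Gg (cmap l q) := by
    funext q
    rw [congrFun (gl_eq l hl) q]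
  have hgC : ContDiff ℝ 3 (fun q : ℝ × ℝ => Gg (cmap l q)) :=
    Gg_contDiff.comp (cmap l).contDiff
  have main : ∀ n : ℕ, 1 ≤ n → n ≤ 3 → ∀ x : ℝ × ℝ,
      ‖iteratedFDeriv ℝ n (fun q => w q * Gg (cmap l q)) x‖ ≤ c := by
    intro n h1n h3n x
    have hmul := norm_iteratedFDeriv_mul_le (𝕜 := ℝ) (N := 3) hw hgC x
      (n := n) (by exact_mod_cast h3n)
    have t0 : |w x| *
        ‖iteratedFDeriv ℝ n (fun q => Gg (cmap l q)) x‖ ≤ K * M := by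
      have hgw := gl_bound_weighted l hl h1n h3n x
      have hgn := norm_nonneg (iteratedFDeriv ℝ n (fun q => Gg (cmap l q)) x)
      have hx := norm_nonneg x
      nlinarith [hK x, abs_nonneg (w x)]
    have tw : ∀ i : ℕ, 1 ≤ i → i ≤ 3 → ‖iteratedFDeriv ℝ i w x‖ ≤ Cm := by
      intro i hi1 hi3
      interval_cases i
      · exact le_trans (hC1 x) hCm1
      · exact le_trans (hC2 x) hCm2
      · exact le_trans (hC3 x) hCm3
    have tg : ∀ j : ℕ, j ≤ 3 → ‖iteratedFDeriv ℝ j (fun q => Gg (cmap l q)) x‖ ≤ M :=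
      fun j hj => gl_bound l hl hj x
    have hMpos : (0:ℝ) < M := by norm_num [hM]
    interval_cases n
    · -- n = 1
      rw [Finset.sum_range_succ, Finset.sum_range_succ, Finset.sum_range_zero] at hmul
      norm_num at hmul
      try rw [show (1-0:ℕ) = 1 from rfl] at hmul
      try rw [show (1-1:ℕ) = 0 from rfl] at hmul
      have p1 : ‖iteratedFDeriv ℝ 1 w x‖ *
          ‖iteratedFDeriv ℝ 0 (fun q => Gg (cmap l q)) x‖ ≤ Cm * M :=
        mul_le_mul (tw 1 le_rfl (by norm_num)) (tg 0 (by norm_num)) (norm_nonneg _) hCm0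
      have hCmM : (0:ℝ) ≤ Cm * M := by positivity
      simp only [← norm_iteratedFDeriv_one] at hmul
      ring_nf at hmul t0 p1 ⊢
      linarith [hmul, t0, p1]
    · -- n = 2
      rw [Finset.sum_range_succ, Finset.sum_range_succ, Finset.sum_range_succ,
        Finset.sum_range_zero] at hmul
      norm_num at hmul
      try rw [show (2-0:ℕ) = 2 from rfl] at hmul
      try rw [show (2-1:ℕ) = 1 from rfl] at hmul
      try rw [show (2-2:ℕ) = 0 from rfl] at hmul
      have p1 : ‖iteratedFDeriv ℝ 1 w x‖ *
          ‖iteratedFDeriv ℝ 1 (fun q => Gg (cmap l q)) x‖ ≤ Cm * M :=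
        mul_le_mul (tw 1 le_rfl (by norm_num)) (tg 1 (by norm_num)) (norm_nonneg _) hCm0
      have p2 : ‖iteratedFDeriv ℝ 2 w x‖ *
          ‖iteratedFDeriv ℝ 0 (fun q => Gg (cmap l q)) x‖ ≤ Cm * M :=
        mul_le_mul (tw 2 (by norm_num) (by norm_num)) (tg 0 (by norm_num))
          (norm_nonneg _) hCm0
      have hCmM : (0:ℝ) ≤ Cm * M := by positivity
      simp only [← norm_iteratedFDeriv_one] at hmul
      ring_nf at hmul t0 p1 p2 ⊢
      linarith [hmul, t0, p1, p2]
    · -- n = 3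
      rw [Finset.sum_range_succ, Finset.sum_range_succ, Finset.sum_range_succ,
        Finset.sum_range_succ, Finset.sum_range_zero] at hmul
      norm_num at hmul
      try rw [show (3-0:ℕ) = 3 from rfl] at hmul
      try rw [show (3-1:ℕ) = 2 from rfl] at hmul
      try rw [show (3-2:ℕ) = 1 from rfl] at hmul
      try rw [show (3-3:ℕ) = 0 from rfl] at hmul
      try rw [show ((3:ℕ).choose 2) = 3 from rfl] at hmul
      have p1 : ‖iteratedFDeriv ℝ 1 w x‖ *
          ‖iteratedFDeriv ℝ 2 (fun q => Gg (cmap l q)) x‖ ≤ Cm * M :=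
        mul_le_mul (tw 1 le_rfl (by norm_num)) (tg 2 (by norm_num)) (norm_nonneg _) hCm0
      have p2 : ‖iteratedFDeriv ℝ 2 w x‖ *
          ‖iteratedFDeriv ℝ 1 (fun q => Gg (cmap l q)) x‖ ≤ Cm * M :=
        mul_le_mul (tw 2 (by norm_num) (by norm_num)) (tg 1 (by norm_num))
          (norm_nonneg _) hCm0
      have p3 : ‖iteratedFDeriv ℝ 3 w x‖ *
          ‖iteratedFDeriv ℝ 0 (fun q => Gg (cmap l q)) x‖ ≤ Cm * M :=
        mul_le_mul (tw 3 (by norm_num) (by norm_num)) (tg 0 (by norm_num))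
          (norm_nonneg _) hCm0
      have hCmM : (0:ℝ) ≤ Cm * M := by positivity
      simp only [← norm_iteratedFDeriv_one] at hmul
      ring_nf at hmul t0 p1 p2 p3 ⊢
      linarith [hmul, t0, p1, p2, p3]
  rw [hfun]
  exact ⟨main 1 (by norm_num) (by norm_num), main 2 (by norm_num) (by norm_num),
    main 3 (by norm_num) (by norm_num)⟩
end
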